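/- The function q ↦ γ(q)^q = (1/π) ∫_{−∞}^{+∞} |sin(x)/x|^q dx is strictly decreasing in q on (1,∞), γ(2) = 1, and consequently γ(q) < 1 for every q > 2. -/

import Mathlib

open MeasureTheory Set Real Filter


lemma sinc_abs_le_one (x : ℝ) : |Real.sin x / x| ≤ 1 := by
  rcases eq_or_ne x 0 with rfl | hx
  · simp
  · rw [abs_div, div_le_one (abs_pos.mpr hx)]
    exact abs_sin_le_abs

lemma fp_even (p : ℝ) (x : ℝ) : |Real.sin (-x) / (-x)| ^ p = |Real.sin x / x| ^ p := by
  rw [Real.sin_neg, neg_div_neg_eq]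

lemma measurable_fp (p : ℝ) : Measurable fun x : ℝ => |Real.sin x / x| ^ p := by
  fun_prop

lemma integrable_fp {p : ℝ} (hp : 1 < p) :
    Integrable (fun x : ℝ => |Real.sin x / x| ^ p) := by
  have hmeas := (measurable_fp p).aestronglyMeasurable (μ := volume)
  have hle1 : ∀ x : ℝ, |Real.sin x / x| ^ p ≤ 1 := fun x =>
    Real.rpow_le_one (abs_nonneg _) (sinc_abs_le_one x) (by linarith)
  have hnn : ∀ x : ℝ, 0 ≤ |Real.sin x / x| ^ p := fun x =>
    Real.rpow_nonneg (abs_nonneg _) p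
  have hIoi : IntegrableOn (fun x : ℝ => |Real.sin x / x| ^ p) (Ioi 1) := by
    have hbound : IntegrableOn (fun x : ℝ => x ^ (-p)) (Ioi 1) :=
      integrableOn_Ioi_rpow_of_lt (by linarith) one_pos
    refine Integrable.mono hbound hmeas.restrict ?_
    filter_upwards [ae_restrict_mem measurableSet_Ioi] with x hx
    rw [mem_Ioi] at hx
    have hx0 : (0:ℝ) < x := by linarith
    have h1 : |Real.sin x / x| ≤ x⁻¹ := by
      rw [abs_div, abs_of_pos hx0, div_le_iff₀ hx0]
      calc |Real.sin x| ≤ 1 := Real.abs_sin_le_one x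
        _ = x⁻¹ * x := by rw [inv_mul_cancel₀ hx0.ne']
    rw [Real.norm_eq_abs, Real.norm_eq_abs, abs_of_nonneg (hnn x),
      abs_of_nonneg (Real.rpow_nonneg hx0.le _), Real.rpow_neg hx0.le,
      ← Real.inv_rpow hx0.le]
    exact Real.rpow_le_rpow (abs_nonneg _) h1 (by linarith)
  have hIcc : IntegrableOn (fun x : ℝ => |Real.sin x / x| ^ p) (Icc (-1) 1) := by
    refine Integrable.mono ((integrableOn_const_iff (C := (1:ℝ))).mpr (Or.inr (by simp))) hmeas.restrict ?_
    · filter_upwards with x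
      rw [Real.norm_eq_abs, abs_of_nonneg (hnn x)]
      simpa using hle1 x
  have hIio : IntegrableOn (fun x : ℝ => |Real.sin x / x| ^ p) (Iio (-1)) := by
    have A : MeasurableEmbedding fun x : ℝ => -x :=
      (Homeomorph.neg ℝ).isClosedEmbedding.measurableEmbedding
    have hmap : volume.restrict (Iio (-1 : ℝ)) =
        Measure.map (fun x : ℝ => -x) (volume.restrict (Ioi 1)) := by
      rw [← Measure.map_neg_eq_self (volume : Measure ℝ)]
      rw [Measure.restrict_map measurable_neg measurableSet_Iio]
      congr 1
      ext x
      simp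
    unfold IntegrableOn
    rw [hmap, A.integrable_map_iff]
    have heq : ((fun x : ℝ => |Real.sin x / x| ^ p) ∘ fun x => -x) =
        fun x : ℝ => |Real.sin x / x| ^ p := by
      funext x; exact fp_even p x
    rw [heq]; exact hIoi
  have huniv : (univ : Set ℝ) = Iio (-1) ∪ (Icc (-1) 1 ∪ Ioi 1) := by
    ext x; simp only [mem_univ, mem_union, mem_Iio, mem_Icc, mem_Ioi, true_iff]
    rcases lt_or_ge x (-1) with h | h
    · exact Or.inl h
    · rcases le_or_gt x 1 with h2 | h2
      · exact Or.inr (Or.inl ⟨h, h2⟩)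
      · exact Or.inr (Or.inr h2)
  rw [← integrableOn_univ, huniv]
  exact hIio.union (hIcc.union hIoi)

lemma integral_fp_strict {p q : ℝ} (hp : 1 < p) (hpq : p < q) :
    ∫ x : ℝ, |Real.sin x / x| ^ q < ∫ x : ℝ, |Real.sin x / x| ^ p := by
  have hq : 1 < q := hp.trans hpq
  have hip := integrable_fp hp
  have hiq := integrable_fp hq
  have hle : ∀ x : ℝ, |Real.sin x / x| ^ q ≤ |Real.sin x / x| ^ p := by
    intro x
    rcases eq_or_lt_of_le (abs_nonneg (Real.sin x / x)) with h | h
    · rw [← h, Real.zero_rpow (by linarith), Real.zero_rpow (by linarith)]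
    · exact Real.rpow_le_rpow_of_exponent_ge h (sinc_abs_le_one x) hpq.le
  have key : 0 < ∫ x : ℝ, (|Real.sin x / x| ^ p - |Real.sin x / x| ^ q) := by
    rw [integral_pos_iff_support_of_nonneg
      (fun x => sub_nonneg.mpr (hle x)) (hip.sub hiq)]
    have hsub : Set.Ioo (1:ℝ) 3 ⊆ Function.support
        fun x => |Real.sin x / x| ^ p - |Real.sin x / x| ^ q := by
      intro x hx
      obtain ⟨hx1, hx3⟩ := hx
      have hx0 : (0:ℝ) < x := by linarith
      have hsin : 0 < Real.sin x :=
        Real.sin_pos_of_pos_of_lt_pi hx0 (by linarith [Real.pi_gt_three])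
      have hb0 : 0 < |Real.sin x / x| := by
        rw [abs_of_pos (div_pos hsin hx0)]; exact div_pos hsin hx0
      have hb1 : |Real.sin x / x| < 1 := by
        rw [abs_of_pos (div_pos hsin hx0), div_lt_one hx0]
        exact Real.sin_lt hx0
      have := Real.rpow_lt_rpow_of_exponent_gt hb0 hb1 hpq
      simp only [Function.mem_support]
      intro hcontra
      rw [sub_eq_zero] at hcontra
      exact absurd hcontra.symm (ne_of_lt this)
    have hvol : (0:ENNReal) < volume (Set.Ioo (1:ℝ) 3) := by
      rw [Real.volume_Ioo]; norm_num
    exact lt_of_lt_of_le hvol (measure_mono hsub)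
  have := integral_sub hip hiq
  rw [this] at key
  linarith



-- L1
lemma L1_int {x : ℝ} (hx : 0 < x) :
    IntegrableOn (fun t : ℝ => t * Real.exp (-(x*t))) (Ioi 0) := by
  have hbound : IntegrableOn (fun t : ℝ => (2/x) * Real.exp (-(x/2) * t)) (Ioi 0) :=
    ((exp_neg_integrableOn_Ioi 0 (by positivity)).const_mul _)
  refine Integrable.mono hbound ((measurable_id.mul (by fun_prop)).aestronglyMeasurable.restrict) ?_
  filter_upwards [ae_restrict_mem measurableSet_Ioi] with t ht
  rw [mem_Ioi] at ht
  rw [Real.norm_eq_abs, Real.norm_eq_abs, abs_of_nonneg (by positivity),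
    abs_of_nonneg (by positivity)]
  have key : t ≤ (2/x) * Real.exp ((x/2)*t) := by
    have := Real.add_one_le_exp ((x/2)*t)
    have h2 : (x/2)*t ≤ Real.exp ((x/2)*t) := by nlinarith
    calc t = (2/x) * ((x/2)*t) := by field_simp
      _ ≤ (2/x) * Real.exp ((x/2)*t) := by
        apply mul_le_mul_of_nonneg_left h2 (by positivity)
  calc t * Real.exp (-(x*t)) ≤ ((2/x) * Real.exp ((x/2)*t)) * Real.exp (-(x*t)) := by
        apply mul_le_mul_of_nonneg_right key (Real.exp_nonneg _)
    _ = (2/x) * Real.exp (-(x/2) * t) := by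
        rw [mul_assoc, ← Real.exp_add]; ring_nf
lemma L1_val {x : ℝ} (hx : 0 < x) :
    ∫ t in Ioi 0, t * Real.exp (-(x*t)) = 1 / x^2 := by
  have := integral_rpow_mul_exp_neg_mul_Ioi (a := 2) (r := x) two_pos hx
  rw [Real.Gamma_two, mul_one] at this
  rw [show (1/x)^(2:ℝ) = 1/x^2 by
    rw [show (2:ℝ) = ((2:ℕ):ℝ) by norm_num, Real.rpow_natCast]; ring] at this
  rw [← this]
  refine setIntegral_congr_fun measurableSet_Ioi (fun t ht => ?_)
  rw [mem_Ioi] at ht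
  rw [show (2:ℝ) - 1 = 1 by norm_num, Real.rpow_one]

-- L2 integrability
lemma L2_int {t : ℝ} (ht : 0 < t) :
    IntegrableOn (fun x : ℝ => Real.sin x ^ 2 * (t * Real.exp (-(x*t)))) (Ioi 0) := by
  have hbound : IntegrableOn (fun x : ℝ => t * Real.exp (-t * x)) (Ioi 0) :=
    (exp_neg_integrableOn_Ioi 0 ht).const_mul _
  refine Integrable.mono hbound ((by measurability :
    Measurable fun x : ℝ => Real.sin x ^ 2 * (t * Real.exp (-(x*t)))).aestronglyMeasurable.restrict) ?_
  filter_upwards [ae_restrict_mem measurableSet_Ioi] with x hx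
  rw [Real.norm_eq_abs, Real.norm_eq_abs, abs_of_nonneg (by positivity),
    abs_of_nonneg (by positivity)]
  have h1 : Real.sin x ^ 2 ≤ 1 := by nlinarith [Real.neg_one_le_sin x, Real.sin_le_one x]
  calc Real.sin x ^ 2 * (t * Real.exp (-(x*t))) ≤ 1 * (t * Real.exp (-(x*t))) := by
        apply mul_le_mul_of_nonneg_right h1 (by positivity)
    _ = t * Real.exp (-t * x) := by rw [one_mul]; ring_nf

lemma aux_bound (a b c u v : ℝ) (hu : |u| ≤ 1) (hv : |v| ≤ 1) :
    |a + (b * u + c * v)| ≤ |a| + (|b| + |c|) := by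
  calc |a + (b * u + c * v)| ≤ |a| + |b * u + c * v| := abs_add_le _ _
    _ ≤ |a| + (|b * u| + |c * v|) := by gcongr; exact abs_add_le _ _
    _ ≤ |a| + (|b| + |c|) := by
        rw [abs_mul, abs_mul]
        gcongr
        · calc |b| * |u| ≤ |b| * 1 := by gcongr
            _ = |b| := mul_one _
        · calc |c| * |v| ≤ |c| * 1 := by gcongr
            _ = |c| := mul_one _

-- L2 value
lemma L2_val {t : ℝ} (ht : 0 < t) :
    ∫ x in Ioi 0, Real.sin x ^ 2 * (t * Real.exp (-(x*t))) = 2 / (t^2 + 4) := by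
  have hD : (0:ℝ) < t^2 + 4 := by positivity
  set B : ℝ := t^2 / (2*(t^2+4)) with hB
  set C : ℝ := -(t / (t^2+4)) with hC
  set F : ℝ → ℝ := fun x => Real.exp (-(x*t)) * (-(1/2) + (B * Real.cos (2*x) + C * Real.sin (2*x)))
    with hF
  have hderiv : ∀ x ∈ Ici (0:ℝ), HasDerivAt F
      (Real.sin x ^ 2 * (t * Real.exp (-(x*t)))) x := by
    intro x _
    have hexp : HasDerivAt (fun x : ℝ => Real.exp (-(x*t))) (Real.exp (-(x*t)) * (-t)) x := by
      have h0 : HasDerivAt (fun x : ℝ => -(x*t)) (-t) x := by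
        exact (hasDerivAt_mul_const t).neg
      exact (Real.hasDerivAt_exp (-(x*t))).comp x h0
    have h2x : HasDerivAt (fun x : ℝ => 2*x) 2 x := by
      simpa using (hasDerivAt_id x).const_mul 2
    have hcos : HasDerivAt (fun x : ℝ => Real.cos (2*x)) (-Real.sin (2*x) * 2) x :=
      (Real.hasDerivAt_cos (2*x)).comp x h2x
    have hsin : HasDerivAt (fun x : ℝ => Real.sin (2*x)) (Real.cos (2*x) * 2) x :=
      (Real.hasDerivAt_sin (2*x)).comp x h2x
    have hinner : HasDerivAt (fun x : ℝ => -(1/2) + (B * Real.cos (2*x) + C * Real.sin (2*x)))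
        (B * (-Real.sin (2*x) * 2) + C * (Real.cos (2*x) * 2)) x :=
      ((hcos.const_mul B).add (hsin.const_mul C)).const_add (-(1/2))
    have := hexp.mul hinner
    refine this.congr_deriv ?_
    have hs : Real.sin x ^ 2 = (1 - Real.cos (2*x)) / 2 := by
      have h1 := Real.cos_two_mul x
      have h2 := Real.sin_sq_add_cos_sq x
      linarith
    rw [hs, hB, hC]
    field_simp
    ring
  have hint : IntegrableOn (fun x : ℝ => Real.sin x ^ 2 * (t * Real.exp (-(x*t)))) (Ioi 0) :=
    L2_int ht
  have htend : Tendsto F atTop (nhds 0) := by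
    have h1 : Tendsto (fun x : ℝ => Real.exp (-(x*t))) atTop (nhds 0) := by
      have h0 : Tendsto (fun x : ℝ => x * t) atTop atTop :=
        Tendsto.atTop_mul_const ht tendsto_id
      exact Real.tendsto_exp_neg_atTop_nhds_zero.comp h0
    have hM : ∀ x : ℝ, ‖F x‖ ≤ (|(-(1/2):ℝ)| + (|B| + |C|)) * Real.exp (-(x*t)) := by
      intro x
      rw [hF, Real.norm_eq_abs, abs_mul, abs_of_nonneg (Real.exp_nonneg _), mul_comm]
      exact mul_le_mul_of_nonneg_right
        (aux_bound _ _ _ _ _ (Real.abs_cos_le_one _) (Real.abs_sin_le_one _))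
        (Real.exp_nonneg _)
    have h2 : Tendsto (fun x : ℝ => (|(-(1/2):ℝ)| + (|B| + |C|)) * Real.exp (-(x*t)))
        atTop (nhds 0) := by
      simpa using h1.const_mul (|(-(1/2):ℝ)| + (|B| + |C|))
    exact squeeze_zero_norm hM h2
  have := integral_Ioi_of_hasDerivAt_of_tendsto' hderiv hint htend
  rw [this, hF]
  simp only [zero_mul, neg_zero, Real.exp_zero, mul_zero, Real.cos_zero, Real.sin_zero, one_mul,
    mul_one, mul_zero, add_zero]
  rw [hB]
  field_simp
  ring

lemma L3_int : IntegrableOn (fun t : ℝ => 2 / (t^2 + 4)) (Ioi 0) := by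
  have hbound : Integrable (fun t : ℝ => 2 * (1 + t^2)⁻¹) :=
    integrable_inv_one_add_sq.const_mul 2
  refine Integrable.mono hbound.integrableOn (by measurability :
    Measurable fun t : ℝ => 2 / (t^2 + 4)).aestronglyMeasurable.restrict ?_
  filter_upwards with t
  rw [Real.norm_eq_abs, Real.norm_eq_abs, abs_of_nonneg (by positivity),
    abs_of_nonneg (by positivity)]
  rw [← div_eq_mul_inv]
  exact div_le_div_of_nonneg_left (by norm_num) (by positivity) (by nlinarith [sq_nonneg t])

lemma L3_val : ∫ t in Ioi 0, 2 / (t^2 + 4) = π / 2 := by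
  have key := integral_comp_mul_left_Ioi (fun u : ℝ => (1 + u^2)⁻¹) 0 (one_half_pos)
  simp only [mul_zero] at key
  rw [integral_Ioi_inv_one_add_sq, Real.arctan_zero, sub_zero] at key
  have heq : ∀ t : ℝ, 2 / (t^2+4) = (1/2) * ((1 + ((1:ℝ)/2*t)^2)⁻¹) := by
    intro t; field_simp; ring
  rw [show (π/2 : ℝ) = (1/2) * ((1/2 : ℝ)⁻¹ • (π/2)) by simp]
  rw [← key, ← MeasureTheory.integral_const_mul]
  refine setIntegral_congr_fun measurableSet_Ioi (fun t _ => heq t)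

lemma half_val : ∫ x in Ioi (0:ℝ), (Real.sin x / x)^2 = π / 2 := by
  have hGmeas : Measurable fun p : ℝ × ℝ =>
      ENNReal.ofReal (Real.sin p.1 ^ 2 * (p.2 * Real.exp (-(p.1 * p.2)))) := by
    measurability
  have step1 : ∀ x ∈ Ioi (0:ℝ), ENNReal.ofReal ((Real.sin x / x)^2) =
      ∫⁻ t in Ioi 0, ENNReal.ofReal (Real.sin x ^ 2 * (t * Real.exp (-(x*t)))) := by
    intro x hx
    rw [mem_Ioi] at hx
    have hint : Integrable (fun t : ℝ => Real.sin x ^ 2 * (t * Real.exp (-(x*t))))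
        (volume.restrict (Ioi 0)) := (L1_int hx).const_mul _
    rw [← MeasureTheory.ofReal_integral_eq_lintegral_ofReal hint ?_]
    · congr 1
      rw [MeasureTheory.integral_const_mul, L1_val hx, div_pow]
      field_simp
    · filter_upwards [ae_restrict_mem measurableSet_Ioi] with t ht
      rw [mem_Ioi] at ht
      positivity
  have step2 : ∀ t ∈ Ioi (0:ℝ),
      (∫⁻ x in Ioi 0, ENNReal.ofReal (Real.sin x ^ 2 * (t * Real.exp (-(x*t))))) =
      ENNReal.ofReal (2 / (t^2+4)) := by
    intro t ht
    rw [mem_Ioi] at ht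
    rw [← MeasureTheory.ofReal_integral_eq_lintegral_ofReal (L2_int ht) ?_]
    · rw [L2_val ht]
    · filter_upwards [ae_restrict_mem measurableSet_Ioi] with x hx
      positivity
  have hmeas0 : AEStronglyMeasurable (fun x : ℝ => (Real.sin x / x)^2)
      (volume.restrict (Ioi 0)) := by
    exact ((Real.measurable_sin.div measurable_id).pow_const 2).aestronglyMeasurable
  rw [MeasureTheory.integral_eq_lintegral_of_nonneg_ae
    (Filter.Eventually.of_forall fun x => sq_nonneg _) hmeas0]
  have chain : (∫⁻ x in Ioi (0:ℝ), ENNReal.ofReal ((Real.sin x / x)^2)) =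
      ENNReal.ofReal (π/2) := by
    rw [setLIntegral_congr_fun measurableSet_Ioi step1]
    rw [lintegral_lintegral_swap hGmeas.aemeasurable]
    rw [setLIntegral_congr_fun measurableSet_Ioi step2]
    rw [← MeasureTheory.ofReal_integral_eq_lintegral_ofReal L3_int
      (Filter.Eventually.of_forall fun t => by positivity), L3_val]
  rw [chain, ENNReal.toReal_ofReal (by positivity)]

lemma full_val : ∫ x : ℝ, |Real.sin x / x| ^ (2:ℝ) = π := by
  have h2 : ∀ x : ℝ, |Real.sin x / x| ^ (2:ℝ) = (fun y : ℝ => (Real.sin y / y)^2) |x| := by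
    intro x
    have habs : |Real.sin x / x| ^ (2:ℝ) = (Real.sin x / x)^2 := by
      rw [show (2:ℝ) = ((2:ℕ):ℝ) by norm_num, Real.rpow_natCast, sq_abs]
    rcases le_or_gt 0 x with h | h
    · rw [habs, abs_of_nonneg h]
    · rw [habs, abs_of_neg h]
      simp [Real.sin_neg, neg_div_neg_eq]
  calc ∫ x : ℝ, |Real.sin x / x| ^ (2:ℝ)
      = ∫ x : ℝ, (fun y : ℝ => (Real.sin y / y)^2) |x| := by
        exact integral_congr_ae (Filter.Eventually.of_forall h2)
    _ = 2 * ∫ x in Ioi (0:ℝ), (Real.sin x / x)^2 := integral_comp_abs (f := fun y : ℝ => (Real.sin y / y)^2)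
    _ = 2 * (π/2) := by rw [half_val]
    _ = π := by ring



/-- `γ(q)^q = (1/π) ∫_{-∞}^{∞} |sin x / x|^q dx`. -/
noncomputable def gammaPow (q : ℝ) : ℝ :=
  (Real.pi)⁻¹ * ∫ x : ℝ, |Real.sin x / x| ^ q

/-- `γ(q) = ((1/π) ∫_{-∞}^{∞} |sin x / x|^q dx)^{1/q}`. -/
noncomputable def gammaFn (q : ℝ) : ℝ := gammaPow q ^ (1 / q)

/-- The function `q ↦ γ(q)^q` is strictly decreasing on `(1,∞)`, `γ(2) = 1`, and
consequently `γ(q) < 1` for every `q > 2`. -/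
theorem stmt6 :
    StrictAntiOn gammaPow (Set.Ioi (1 : ℝ)) ∧
    gammaFn 2 = 1 ∧
    ∀ q : ℝ, 2 < q → gammaFn q < 1 := by
  refine ⟨?anti, ?two, ?lt⟩
  case anti =>
    intro p hp q hq hpq
    rw [Set.mem_Ioi] at hp hq
    exact mul_lt_mul_of_pos_left (integral_fp_strict hp hpq) (inv_pos.mpr Real.pi_pos)
  case two =>
    rw [gammaFn, show gammaPow 2 = 1 by
      rw [gammaPow, full_val, inv_mul_cancel₀ Real.pi_ne_zero], Real.one_rpow]
  case lt =>
    intro q hq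
    have hanti : StrictAntiOn gammaPow (Set.Ioi (1 : ℝ)) := by
      intro p hp q' hq' hpq
      rw [Set.mem_Ioi] at hp hq'
      exact mul_lt_mul_of_pos_left (integral_fp_strict hp hpq) (inv_pos.mpr Real.pi_pos)
    have h1 : gammaPow q < 1 := by
      rw [show (1:ℝ) = gammaPow 2 by
        rw [gammaPow, full_val, inv_mul_cancel₀ Real.pi_ne_zero]]
      exact hanti (by norm_num : (2:ℝ) ∈ Set.Ioi 1) (Set.mem_Ioi.mpr (by linarith)) hq
    have h0 : 0 ≤ gammaPow q := by
      apply mul_nonneg (inv_nonneg.mpr Real.pi_pos.le)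
      exact integral_nonneg fun x => Real.rpow_nonneg (abs_nonneg _) q
    exact Real.rpow_lt_one h0 h1 (by positivity)
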